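/- Let L ∈ ℝ^{k×n} have rank k ≤ n, let Z be the set of indices of non-zero columns of L, and define i ∼ j for i,j ∈ Z if columns L_i and L_j are scalar multiples of each other. If there exists W ∈ ℝ^{k×n} with rowspan(W) = rowspan(L) whose rows have pairwise disjoint supports, then Z/∼ has exactly k equivalence classes. -/

import Mathlib

/-- Row space of a matrix: the span of its rows. -/
def rowspan {k n : ℕ} (M : Matrix (Fin k) (Fin n) ℝ) : Submodule ℝ (Fin n → ℝ) :=
  Submodule.span ℝ (Set.range M)

/-- The set of indices of non-zero columns of `L`. -/
def colNonzero {k n : ℕ} (L : Matrix (Fin k) (Fin n) ℝ) : Set (Fin n) :=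
  {i | ∃ r, L r i ≠ 0}

/-- Columns `i` and `j` of `L` are proportional (non-zero scalar multiple). -/
def colRel {k n : ℕ} (L : Matrix (Fin k) (Fin n) ℝ) (i j : Fin n) : Prop :=
  ∃ c : ℝ, c ≠ 0 ∧ ∀ r, L r i = c * L r j

theorem k_classes_of_disjoint_support_basis {k n : ℕ} (hkn : k ≤ n)
    (L : Matrix (Fin k) (Fin n) ℝ) (hrank : L.rank = k)
    (hW : ∃ W : Matrix (Fin k) (Fin n) ℝ,
      rowspan W = rowspan L ∧
      ∀ r r' : Fin k, r ≠ r' → ∀ i, W r i ≠ 0 → W r' i = 0) :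
    ∃ f : colNonzero L → Fin k, Function.Surjective f ∧
      ∀ i j : colNonzero L, f i = f j ↔ colRel L i.1 j.1 := by
  obtain ⟨W, hspan, hdis⟩ := hW
  -- obtain S with L = S * W
  have hrowL : ∀ r, ∃ c : Fin k → ℝ, ∑ t, c t • W t = L r := by
    intro r
    have : L r ∈ rowspan W := by
      rw [hspan]; exact Submodule.subset_span ⟨r, rfl⟩
    exact (Submodule.mem_span_range_iff_exists_fun ℝ).mp this
  choose S hS using hrowL
  have hLSW : ∀ r i, L r i = ∑ t, S r t * W t i := by
    intro r i
    rw [← hS r]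
    simp [Finset.sum_apply]
  have hLmul : L = Matrix.of S * W := by
    ext r i
    rw [Matrix.mul_apply]
    exact hLSW r i
  -- S has full rank, so mulVec is injective
  have hSrank : (Matrix.of S).rank = k := by
    have h1 : L.rank ≤ (Matrix.of S).rank := by
      rw [hLmul]; exact Matrix.rank_mul_le_left _ _
    have h2 : (Matrix.of S).rank ≤ k := by
      simpa using Matrix.rank_le_card_width (Matrix.of S)
    omega
  have hSinj : Function.Injective (Matrix.of S).mulVec := by
    have hfin : Module.finrank ℝ (Fin k → ℝ) = k := by simp
    have hsurj : Function.Surjective (Matrix.of S).mulVecLin := by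
      rw [← LinearMap.range_eq_top]
      apply Submodule.eq_top_of_finrank_eq
      rw [hfin]
      exact hSrank
    exact (LinearMap.injective_iff_surjective).mpr hsurj
  -- each nonzero column of L has a (unique) nonzero entry of W
  have hcolW : ∀ i : Fin n, (∃ r, L r i ≠ 0) → ∃ r, W r i ≠ 0 := by
    intro i ⟨r, hr⟩
    by_contra h
    push_neg at h
    apply hr
    rw [hLSW]
    simp [h]
  -- reduction of the matrix product at a column with a designated nonzero entry of W
  have hred : ∀ (i : Fin n) (r : Fin k), W r i ≠ 0 → ∀ s, L s i = S s r * W r i := by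
    intro i r hri s
    rw [hLSW]
    apply Finset.sum_eq_single
    · intro t _ htr
      rw [hdis r t (fun h => htr h.symm) i hri, mul_zero]
    · intro h; exact absurd (Finset.mem_univ r) h
  -- each column of S is nonzero
  have hScol : ∀ r : Fin k, ∃ s, S s r ≠ 0 := by
    intro r
    by_contra h
    push_neg at h
    have h0 : (Matrix.of S).mulVec (Pi.single r 1) = (Matrix.of S).mulVec 0 := by
      rw [Matrix.mulVec_zero]
      funext s
      simp [Matrix.mulVec, dotProduct, Pi.single_apply, mul_ite, h s]
    have := hSinj h0
    simpa using congrFun this r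
  -- define f
  have hfe : ∀ i : colNonzero L, ∃ r, W r (i : Fin n) ≠ 0 := fun i => hcolW i i.2
  choose f hf using hfe
  have hfu : ∀ (i : colNonzero L) (r : Fin k), W r (i : Fin n) ≠ 0 → r = f i := by
    intro i r hr
    by_contra hne
    exact hf i (hdis r (f i) hne i hr)
  refine ⟨f, ?_, ?_⟩
  · -- surjectivity
    -- rows of W are linearly independent since they span a k-dimensional space
    have hWfr : Module.finrank ℝ (rowspan W) = k := by
      have h1 : (L.transpose).rank = Module.finrank ℝ (rowspan L) := by
        rw [Matrix.rank_eq_finrank_span_cols]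
        rfl
      rw [hspan, ← h1, Matrix.rank_transpose, hrank]
    have hli : LinearIndependent ℝ W := by
      refine linearIndependent_iff_card_eq_finrank_span.mpr ?_
      simp only [Set.finrank, Fintype.card_fin]; exact hWfr.symm
    intro r
    have hWr : W r ≠ 0 := hli.ne_zero r
    have : ∃ i, W r i ≠ 0 := by
      by_contra h
      push_neg at h
      exact hWr (funext h)
    obtain ⟨i, hi⟩ := this
    obtain ⟨s, hs⟩ := hScol r
    have hiL : i ∈ colNonzero L := ⟨s, by rw [hred i r hi s]; exact mul_ne_zero hs hi⟩
    exact ⟨⟨i, hiL⟩, (hfu ⟨i, hiL⟩ r hi).symm⟩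
  · intro i j
    constructor
    · intro hij
      have hWj : W (f i) (j : Fin n) ≠ 0 := by rw [hij]; exact hf j
      refine ⟨W (f i) i / W (f i) j, div_ne_zero (hf i) hWj, fun s => ?_⟩
      rw [hred i (f i) (hf i) s, hred j (f i) hWj s]
      field_simp
    · rintro ⟨c, hc, hcol⟩
      by_contra hne
      set g : Fin k → ℝ := Pi.single (f i) (W (f i) (i : Fin n))
        - Pi.single (f j) (c * W (f j) (j : Fin n)) with hg
      have h0 : (Matrix.of S).mulVec g = (Matrix.of S).mulVec 0 := by
        rw [Matrix.mulVec_zero]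
        funext s
        have : (Matrix.of S).mulVec g s
            = S s (f i) * W (f i) (i : Fin n) - c * (S s (f j) * W (f j) (j : Fin n)) := by
          simp [Matrix.mulVec, dotProduct, hg, Pi.single_apply, mul_ite,
            mul_sub, Finset.sum_sub_distrib]
          ring
        rw [this, ← hred i (f i) (hf i) s, ← hred j (f j) (hf j) s, hcol s]
        simp
      have hg0 := hSinj h0
      have : g (f i) = 0 := by rw [hg0]; rfl
      rw [hg] at this
      simp [Pi.single_apply, hne] at this
      exact hf i this
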